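/- Let (X_{nk})_{1≤k≤k_n, n∈ℕ} be a square-integrable adapted d-dimensional array satisfying the conditional Lindeberg condition (CLB^d) and the norming condition (N^d): ∑_{k=1}^{k_n} E(X_{nk}X_{nk}ᵀ | F_{n,k-1}) → A in probability for some random symmetric positive semidefinite matrix A. Then the Raikov condition (R^d) holds: ∑_{k=1}^{k_n} X_{nk}X_{nk}ᵀ → A in probability as n → ∞. -/

import Mathlib

open MeasureTheory Filter

section Aux
variable {Ω : Type*} {m0 : MeasurableSpace Ω} {μ : Measure Ω}

/-- Pointwise truncated-sum bound: summing `c k` only while the running sum (including the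
current term) stays below `η` yields a total at most `η`. -/
lemma aux_trunc_sum_le {c : ℕ → ℝ} {η : ℝ} (hη : 0 ≤ η) (K : ℕ)
    (hc : ∀ k ∈ Finset.Icc 1 K, 0 ≤ c k) :
    ∑ k ∈ Finset.Icc 1 K, (if (∑ j ∈ Finset.Icc 1 k, c j) < η then c k else 0) ≤ η := by
  induction K with
  | zero => simpa using hη
  | succ K ih =>
    rw [Finset.sum_Icc_succ_top (Nat.one_le_iff_ne_zero.mpr (Nat.succ_ne_zero K))]
    by_cases h : (∑ j ∈ Finset.Icc 1 (K + 1), c j) < η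
    · have hall : ∀ k ∈ Finset.Icc 1 K,
          (if (∑ j ∈ Finset.Icc 1 k, c j) < η then c k else 0) = c k := by
        intro k hk
        have hk' : k ≤ K := (Finset.mem_Icc.mp hk).2
        have hsub : Finset.Icc 1 k ⊆ Finset.Icc 1 (K + 1) :=
          Finset.Icc_subset_Icc le_rfl (hk'.trans (Nat.le_succ K))
        have hmono : (∑ j ∈ Finset.Icc 1 k, c j) ≤ ∑ j ∈ Finset.Icc 1 (K + 1), c j :=
          Finset.sum_le_sum_of_subset_of_nonneg hsub (fun j hj _ => hc j hj)
        rw [if_pos (lt_of_le_of_lt hmono h)]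
      rw [Finset.sum_congr rfl hall, if_pos h]
      refine le_of_lt ?_
      rwa [Finset.sum_Icc_succ_top (Nat.one_le_iff_ne_zero.mpr (Nat.succ_ne_zero K))] at h
    · rw [if_neg h, add_zero]
      exact ih (fun k hk => hc k (Finset.Icc_subset_Icc le_rfl (Nat.le_succ K) hk))

/-- Addition of limits in measure. -/
lemma aux_tim_add {ι : Type*} {l : Filter ι} {f g : ι → Ω → ℝ} {F G : Ω → ℝ}
    (hf : TendstoInMeasure μ f l F) (hg : TendstoInMeasure μ g l G) :
    TendstoInMeasure μ (fun i ω => f i ω + g i ω) l (fun ω => F ω + G ω) := by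
  rw [tendstoInMeasure_iff_dist]
  intro ε hε
  have hle : ∀ i, μ {ω | ε ≤ dist (f i ω + g i ω) (F ω + G ω)}
      ≤ μ {ω | ε / 2 ≤ dist (f i ω) (F ω)} + μ {ω | ε / 2 ≤ dist (g i ω) (G ω)} := by
    intro i
    refine le_trans (measure_mono ?_) (measure_union_le _ _)
    intro ω hω
    simp only [Set.mem_setOf_eq, Real.dist_eq] at hω
    by_cases h1 : ε / 2 ≤ |f i ω - F ω|
    · exact Or.inl h1
    · refine Or.inr ?_
      simp only [Set.mem_setOf_eq, Real.dist_eq]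
      push_neg at h1
      have habs : |f i ω + g i ω - (F ω + G ω)| ≤ |f i ω - F ω| + |g i ω - G ω| := by
        have he : f i ω + g i ω - (F ω + G ω) = (f i ω - F ω) + (g i ω - G ω) := by ring
        rw [he]; exact abs_add_le _ _
      linarith
  have h2 := (tendstoInMeasure_iff_dist.mp hf (ε / 2) (by positivity)).add (tendstoInMeasure_iff_dist.mp hg (ε / 2) (by positivity))
  rw [add_zero] at h2
  exact tendsto_of_tendsto_of_tendsto_of_le_of_le tendsto_const_nhds h2
    (fun i => zero_le) hle

lemma aux_tim_zero {ι : Type*} {l : Filter ι} {f : ι → Ω → ℝ}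
    (h : ∀ i ω, f i ω = 0) : TendstoInMeasure μ f l (fun _ => 0) := by
  rw [tendstoInMeasure_iff_dist]
  intro ε hε
  have heq : (fun i => μ {ω | ε ≤ dist (f i ω) 0}) = fun _ => 0 := by
    funext i
    convert measure_empty (μ := μ)
    ext ω; simp [h, Real.dist_eq, not_le, hε]
  rw [heq]
  exact tendsto_const_nhds

/-- Finite sums of limits in measure. -/
lemma aux_tim_finset_sum {ι ι' : Type*} {l : Filter ι} (s : Finset ι') {f : ι' → ι → Ω → ℝ}
    {F : ι' → Ω → ℝ} (h : ∀ i ∈ s, TendstoInMeasure μ (f i) l (F i)) :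
    TendstoInMeasure μ (fun n ω => ∑ i ∈ s, f i n ω) l (fun ω => ∑ i ∈ s, F i ω) := by
  classical
  induction s using Finset.induction with
  | empty => simpa using aux_tim_zero (fun _ _ => rfl)
  | insert a s' hx ih =>
    have h1 := h a (Finset.mem_insert_self a s')
    have h2 := ih (fun i hi => h i (Finset.mem_insert_of_mem hi))
    have h3 := aux_tim_add h1 h2
    refine TendstoInMeasure.congr (fun n => ?_) ?_ h3 <;>
      [skip; skip] <;> filter_upwards with ω <;> rw [Finset.sum_insert hx]

/-- Markov/Chebyshev for second moments. -/
lemma aux_markov [IsProbabilityMeasure μ] {f : Ω → ℝ}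
    (hf : Integrable (fun ω => f ω ^ 2) μ) {δ : ℝ} (hδ : 0 < δ) :
    μ {ω | δ ≤ |f ω|} ≤ ENNReal.ofReal ((∫ ω, f ω ^ 2 ∂μ) / δ ^ 2) := by
  have hset : {ω | δ ≤ |f ω|} = {ω | δ ^ 2 ≤ f ω ^ 2} := by
    ext ω
    simp only [Set.mem_setOf_eq]
    rw [← sq_abs (f ω)]
    exact (pow_le_pow_iff_left₀ hδ.le (abs_nonneg _) two_ne_zero).symm
  rw [hset]
  have key := mul_meas_ge_le_integral_of_nonneg
    (ae_of_all μ (fun ω => sq_nonneg (f ω))) hf (δ ^ 2)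
  have hne : μ {ω | δ ^ 2 ≤ f ω ^ 2} ≠ ⊤ := measure_ne_top μ _
  rw [← ENNReal.ofReal_toReal hne]
  refine ENNReal.ofReal_le_ofReal ?_
  rw [le_div_iff₀ (by positivity : (0:ℝ) < δ ^ 2)]
  calc (μ {ω | δ ^ 2 ≤ f ω ^ 2}).toReal * δ ^ 2
      = δ ^ 2 * (μ {x | δ ^ 2 ≤ f x ^ 2}).toReal := by rw [mul_comm]
    _ ≤ ∫ ω, f ω ^ 2 ∂μ := key

/-- Extract an eventual bound from convergence in measure. -/
lemma aux_tim_eventually {f : ℕ → Ω → ℝ} {g : Ω → ℝ}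
    (h : TendstoInMeasure μ f atTop g) {ε : ℝ} {ρ : ENNReal} (hε : 0 < ε) (hρ : 0 < ρ) :
    ∀ᶠ n in atTop, μ {ω | ε ≤ dist (f n ω) (g ω)} < ρ :=
  (tendstoInMeasure_iff_dist.mp h ε hε).eventually_lt_const hρ

lemma aux_ae_finset {s : Finset ℕ} {P : ℕ → Ω → Prop}
    (h : ∀ k ∈ s, ∀ᵐ ω ∂μ, P k ω) : ∀ᵐ ω ∂μ, ∀ k ∈ s, P k ω := by
  have h2 := (ae_ball_iff s.countable_toSet).2 (fun k hk => h k hk)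
  filter_upwards [h2] with ω hω k hk using hω k (Finset.mem_coe.mpr hk)

/-- Measurability of the stopping events. -/
lemma aux_stop_meas (G : ℕ → MeasurableSpace Ω) (hGmono : Monotone G)
    (Z : ℕ → Ω → ℝ) (C : ℝ) (k : ℕ) :
    MeasurableSet[G (k - 1)]
      {ω | (∑ j ∈ Finset.Icc 1 k, (μ[Z j | G (j - 1)]) ω) < C} := by
  have hmeas : Measurable[G (k - 1)] fun ω => ∑ j ∈ Finset.Icc 1 k, (μ[Z j | G (j - 1)]) ω := by
    refine Finset.measurable_sum _ (fun j hj => ?_)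
    have hj' : j - 1 ≤ k - 1 := Nat.sub_le_sub_right (Finset.mem_Icc.mp hj).2 1
    exact ((stronglyMeasurable_condExp (f := Z j) (m := G (j - 1))).mono
      (hGmono hj')).measurable
  exact hmeas measurableSet_Iio

/-- A.e. bound on the stopped sum of conditional expectations. -/
lemma aux_stopped_cond_sum_le (G : ℕ → MeasurableSpace Ω)
    (K : ℕ) (Z : ℕ → Ω → ℝ) (hZnn : ∀ k, 0 ≤ᵐ[μ] Z k) {C : ℝ} (hC : 0 ≤ C) :
    ∀ᵐ ω ∂μ, ∑ k ∈ Finset.Icc 1 K,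
        ({ω' | (∑ j ∈ Finset.Icc 1 k, (μ[Z j | G (j - 1)]) ω') < C}).indicator
          (fun ω' => (μ[Z k | G (k - 1)]) ω') ω ≤ C := by
  have hnn : ∀ᵐ ω ∂μ, ∀ k ∈ Finset.Icc 1 K, 0 ≤ (μ[Z k | G (k - 1)]) ω :=
    aux_ae_finset (fun k _ => condExp_nonneg (hZnn k))
  filter_upwards [hnn] with ω hω
  refine le_trans (le_of_eq (Finset.sum_congr rfl fun k _ => ?_))
    (aux_trunc_sum_le (c := fun j => (μ[Z j | G (j - 1)]) ω) hC K hω)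
  by_cases h : (∑ j ∈ Finset.Icc 1 k, (μ[Z j | G (j - 1)]) ω) < C <;>
    simp [Set.indicator_apply, Set.mem_setOf_eq, h]

/-- Lenglart-type domination inequality for a finite adapted sum. -/
lemma aux_lenglart [IsProbabilityMeasure μ] (G : ℕ → MeasurableSpace Ω)
    (hGle : ∀ k, G k ≤ m0) (hGmono : Monotone G) (K : ℕ) (Z : ℕ → Ω → ℝ)
    (hZnn : ∀ k, 0 ≤ᵐ[μ] Z k) (hZint : ∀ k, Integrable (Z k) μ)
    {η δ : ℝ} (hη : 0 < η) (hδ : 0 < δ) :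
    μ {ω | δ ≤ ∑ k ∈ Finset.Icc 1 K, Z k ω}
      ≤ μ {ω | η ≤ ∑ k ∈ Finset.Icc 1 K, (μ[Z k | G (k - 1)]) ω} + ENNReal.ofReal (η / δ) := by
  classical
  set c : ℕ → Ω → ℝ := fun k => μ[Z k | G (k - 1)] with hc
  set B : ℕ → Set Ω := fun k => {ω | (∑ j ∈ Finset.Icc 1 k, c j ω) < η} with hB
  have hBmeas : ∀ k, MeasurableSet[G (k - 1)] (B k) := fun k => aux_stop_meas G hGmono Z η k
  set W : Ω → ℝ := fun ω => ∑ k ∈ Finset.Icc 1 K, (B k).indicator (Z k) ω with hW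
  have hWint : Integrable W μ := by
    refine integrable_finset_sum _ (fun k _ => ?_)
    exact (hZint k).indicator (hGle (k - 1) _ (hBmeas k))
  have hWnn : 0 ≤ᵐ[μ] W := by
    have h0 : ∀ᵐ ω ∂μ, ∀ k ∈ Finset.Icc 1 K, 0 ≤ Z k ω := aux_ae_finset (fun k _ => hZnn k)
    filter_upwards [h0] with ω hω
    exact Finset.sum_nonneg fun k hk =>
      Set.indicator_apply_nonneg (fun _ => hω k hk)
  -- Step 1: ∫ W ≤ η
  have hWle : ∫ ω, W ω ∂μ ≤ η := by
    have h1 : ∫ ω, W ω ∂μ = ∑ k ∈ Finset.Icc 1 K, ∫ ω, (B k).indicator (Z k) ω ∂μ :=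
      integral_finset_sum _ (fun k _ => (hZint k).indicator (hGle (k - 1) _ (hBmeas k)))
    have h2 : ∀ k, ∫ ω, (B k).indicator (Z k) ω ∂μ = ∫ ω, (B k).indicator (c k) ω ∂μ := by
      intro k
      rw [integral_indicator (hGle (k - 1) _ (hBmeas k)),
        integral_indicator (hGle (k - 1) _ (hBmeas k)),
        ← setIntegral_condExp (hGle (k - 1)) (hZint k) (hBmeas k)]
    have h3 : ∫ ω, W ω ∂μ = ∫ ω, ∑ k ∈ Finset.Icc 1 K, (B k).indicator (c k) ω ∂μ := by
      rw [h1, Finset.sum_congr rfl (fun k _ => h2 k),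
        ← integral_finset_sum _ (fun k _ =>
          (integrable_condExp (f := Z k) (m := G (k - 1))).indicator
            (hGle (k - 1) _ (hBmeas k)))]
    rw [h3]
    have hbound := aux_stopped_cond_sum_le (μ := μ) G K Z hZnn (le_of_lt hη)
    calc ∫ ω, ∑ k ∈ Finset.Icc 1 K, (B k).indicator (c k) ω ∂μ
        ≤ ∫ _ω, η ∂μ := by
          refine integral_mono_ae (integrable_finset_sum _ (fun k _ =>
            (integrable_condExp (f := Z k) (m := G (k - 1))).indicator
              (hGle (k - 1) _ (hBmeas k)))) (integrable_const η) ?_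
          filter_upwards [hbound] with ω hω
          convert hω using 2
      _ = η := by simp
  -- Step 2: a.e. inclusion
  set S2 : Set Ω := {ω | η ≤ ∑ k ∈ Finset.Icc 1 K, c k ω} with hS2
  set S3 : Set Ω := {ω | δ ≤ W ω} with hS3
  set Su : Set Ω := S2 ∪ S3 with hSu
  have hsub : ({ω | δ ≤ ∑ k ∈ Finset.Icc 1 K, Z k ω} : Set Ω) ≤ᵐ[μ] Su := by
    have h0 : ∀ᵐ ω ∂μ, ∀ k ∈ Finset.Icc 1 K, 0 ≤ c k ω :=
      aux_ae_finset (fun k _ => condExp_nonneg (hZnn k))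
    filter_upwards [h0] with ω hω hmem
    by_cases hPK : η ≤ ∑ k ∈ Finset.Icc 1 K, c k ω
    · exact Or.inl hPK
    · refine Or.inr ?_
      push_neg at hPK
      have hWeq : W ω = ∑ k ∈ Finset.Icc 1 K, Z k ω := by
        refine Finset.sum_congr rfl (fun k hk => ?_)
        have hk' : k ≤ K := (Finset.mem_Icc.mp hk).2
        have hsub' : Finset.Icc 1 k ⊆ Finset.Icc 1 K := Finset.Icc_subset_Icc le_rfl hk'
        have hmono : (∑ j ∈ Finset.Icc 1 k, c j ω) ≤ ∑ j ∈ Finset.Icc 1 K, c j ω :=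
          Finset.sum_le_sum_of_subset_of_nonneg hsub' (fun j hj _ => hω j hj)
        have : ω ∈ B k := lt_of_le_of_lt hmono hPK
        simp [Set.indicator_of_mem this]
      show δ ≤ W ω
      rw [hWeq]
      exact hmem
  -- Step 3: Markov for W
  have hMarkov : μ S3 ≤ ENNReal.ofReal (η / δ) := by
    have key := mul_meas_ge_le_integral_of_nonneg hWnn hWint δ
    have hne : μ S3 ≠ ⊤ := measure_ne_top μ _
    rw [← ENNReal.ofReal_toReal hne]
    refine ENNReal.ofReal_le_ofReal ?_
    rw [le_div_iff₀ hδ]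
    calc (μ S3).toReal * δ = δ * (μ {x | δ ≤ W x}).toReal := by rw [mul_comm, hS3]
      _ ≤ ∫ ω, W ω ∂μ := key
      _ ≤ η := hWle
  calc μ {ω | δ ≤ ∑ k ∈ Finset.Icc 1 K, Z k ω}
      ≤ μ Su := measure_mono_ae hsub
    _ = μ (S2 ∪ S3) := by rw [hSu]
    _ ≤ μ S2 + μ S3 := measure_union_le _ _
    _ ≤ μ S2 + ENNReal.ofReal (η / δ) := add_le_add le_rfl hMarkov

/-- If the sums of conditional expectations of nonnegative terms tend to `0` in measure,
so do the sums themselves (Lenglart's domination). -/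
lemma aux_tim_of_cond [IsProbabilityMeasure μ] (𝓕 : ℕ → ℕ → MeasurableSpace Ω)
    (hFmono : ∀ n, Monotone (𝓕 n)) (hFle : ∀ n k, 𝓕 n k ≤ m0) (kn : ℕ → ℕ)
    (Z : ℕ → ℕ → Ω → ℝ) (hZnn : ∀ n k, 0 ≤ᵐ[μ] Z n k) (hZint : ∀ n k, Integrable (Z n k) μ)
    (hcond : TendstoInMeasure μ
      (fun n ω => ∑ k ∈ Finset.Icc 1 (kn n), (μ[Z n k | 𝓕 n (k - 1)]) ω) atTop (fun _ => 0)) :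
    TendstoInMeasure μ
      (fun n ω => ∑ k ∈ Finset.Icc 1 (kn n), Z n k ω) atTop (fun _ => 0) := by
  rw [tendstoInMeasure_iff_dist]
  intro δ hδ
  rw [ENNReal.tendsto_atTop_zero]
  intro ρ hρ
  set η : ℝ := δ * (min (ρ / 2) 1).toReal with hη_def
  have hmin_ne_top : min (ρ / 2) 1 ≠ ⊤ := ne_top_of_le_ne_top (by norm_num) (min_le_right _ _)
  have hmin_pos : 0 < min (ρ / 2) 1 := lt_min (ENNReal.half_pos hρ.ne') (by norm_num)
  have hr_pos : 0 < (min (ρ / 2) 1).toReal := ENNReal.toReal_pos hmin_pos.ne' hmin_ne_top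
  have hη : 0 < η := mul_pos hδ hr_pos
  have hofReal : ENNReal.ofReal (η / δ) ≤ ρ / 2 := by
    rw [hη_def, mul_comm, mul_div_assoc, div_self hδ.ne', mul_one,
      ENNReal.ofReal_toReal hmin_ne_top]
    exact min_le_left _ _
  have hev := (tendstoInMeasure_iff_dist.mp hcond η hη).eventually_lt_const (ENNReal.half_pos hρ.ne')
  rw [eventually_atTop] at hev
  obtain ⟨N, hN⟩ := hev
  refine ⟨N, fun n hn => ?_⟩
  -- the target set sits inside the nonneg-sum set (a.e.)
  have hae : ∀ᵐ ω ∂μ, ∀ k ∈ Finset.Icc 1 (kn n), 0 ≤ Z n k ω :=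
    aux_ae_finset (fun k _ => hZnn n k)
  have hsub1 : μ {ω | δ ≤ dist (∑ k ∈ Finset.Icc 1 (kn n), Z n k ω) 0}
      ≤ μ {ω | δ ≤ ∑ k ∈ Finset.Icc 1 (kn n), Z n k ω} := by
    refine measure_mono_ae ?_
    filter_upwards [hae] with ω hω hmem
    have hnn : 0 ≤ ∑ k ∈ Finset.Icc 1 (kn n), Z n k ω := Finset.sum_nonneg hω
    have h' : δ ≤ |∑ k ∈ Finset.Icc 1 (kn n), Z n k ω| := by
      simpa [Real.dist_eq] using (show δ ≤ dist (∑ k ∈ Finset.Icc 1 (kn n), Z n k ω) 0 from hmem)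
    show δ ≤ ∑ k ∈ Finset.Icc 1 (kn n), Z n k ω
    rwa [abs_of_nonneg hnn] at h'
  have hsub2 : μ {ω | η ≤ ∑ k ∈ Finset.Icc 1 (kn n), (μ[Z n k | 𝓕 n (k - 1)]) ω}
      ≤ μ {ω | η ≤ dist (∑ k ∈ Finset.Icc 1 (kn n), (μ[Z n k | 𝓕 n (k - 1)]) ω) 0} := by
    refine measure_mono (fun ω hω => ?_)
    simp only [Set.mem_setOf_eq, Real.dist_eq, sub_zero] at hω ⊢
    exact le_trans hω (le_abs_self _)
  calc μ {ω | δ ≤ dist (∑ k ∈ Finset.Icc 1 (kn n), Z n k ω) 0}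
      ≤ μ {ω | δ ≤ ∑ k ∈ Finset.Icc 1 (kn n), Z n k ω} := hsub1
    _ ≤ μ {ω | η ≤ ∑ k ∈ Finset.Icc 1 (kn n), (μ[Z n k | 𝓕 n (k - 1)]) ω}
          + ENNReal.ofReal (η / δ) :=
        aux_lenglart (𝓕 n) (hFle n) (hFmono n) (kn n) (Z n) (hZnn n) (hZint n) hη hδ
    _ ≤ ρ / 2 + ρ / 2 := by
        refine add_le_add (le_trans hsub2 ?_) hofReal
        exact (hN n hn).le
    _ = ρ := ENNReal.add_halves ρ

/-- Conditional expectations preserve a.e. bounds. -/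
lemma aux_condExp_bdd [IsProbabilityMeasure μ] {m : MeasurableSpace Ω} (hm : m ≤ m0)
    {f : Ω → ℝ} {b : ℝ} (hf : Integrable f μ) (hbdd : ∀ᵐ ω ∂μ, |f ω| ≤ b) :
    ∀ᵐ ω ∂μ, |(μ[f | m]) ω| ≤ b := by
  have h1 : f ≤ᵐ[μ] fun _ => b := hbdd.mono fun ω h => (abs_le.1 h).2
  have h2 : (fun _ => -b) ≤ᵐ[μ] f := hbdd.mono fun ω h => (abs_le.1 h).1
  have hu := condExp_mono (m := m) hf (integrable_const b) h1
  have hl := condExp_mono (m := m) (integrable_const (-b)) hf h2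
  filter_upwards [hu, hl] with ω huω hlω
  rw [abs_le]
  constructor
  · have := congrFun (condExp_const hm (-b) (μ := μ)) ω
    rw [this] at hlω; exact hlω
  · have := congrFun (condExp_const hm b (μ := μ)) ω
    rw [this] at huω; exact huω

/-- Conditional variance bound on a predictable set:
`∫_B (W - E[W|m])² ≤ ∫_B W² ≤ a ∫_B E[N|m]` when `W² ≤ a N` pointwise. -/
lemma aux_var_bound [IsProbabilityMeasure μ] {m : MeasurableSpace Ω} (hm : m ≤ m0)
    {Wf Nf : Ω → ℝ} (hWint : Integrable Wf μ)
    (hWmeas : @AEStronglyMeasurable Ω ℝ _ m0 m0 Wf μ)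
    {a b : ℝ} (hb : 0 ≤ b) (hWbdd : ∀ ω, |Wf ω| ≤ b)
    (hWsq : ∀ ω, Wf ω ^ 2 ≤ a * Nf ω) (hNint : Integrable Nf μ)
    {B : Set Ω} (hB : MeasurableSet[m] B) :
    ∫ ω in B, (Wf ω - (μ[Wf | m]) ω) ^ 2 ∂μ ≤ a * ∫ ω in B, (μ[Nf | m]) ω ∂μ := by
  set E : Ω → ℝ := μ[Wf | m] with hE
  have hEmeas : StronglyMeasurable[m] E := stronglyMeasurable_condExp
  have hEint : Integrable E μ := integrable_condExp
  have hEbdd : ∀ᵐ ω ∂μ, |E ω| ≤ b := aux_condExp_bdd hm hWint (ae_of_all μ hWbdd)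
  have hBmeas : MeasurableSet[m0] B := hm _ hB
  -- integrability of the various products
  have hWsq_int : Integrable (fun ω => Wf ω ^ 2) μ := by
    refine Integrable.bdd_mul (c := b) hWint hWmeas (ae_of_all μ fun ω => ?_) |>.congr ?_
    · simpa using hWbdd ω
    · filter_upwards with ω; ring
  have hWE_int : Integrable (fun ω => Wf ω * E ω) μ :=
    (Integrable.bdd_mul (c := b) hEint hWmeas (ae_of_all μ fun ω => by simpa using hWbdd ω))
  have hE2_int : Integrable (fun ω => E ω ^ 2) μ := by
    refine Integrable.bdd_mul (c := b) hEint (hEmeas.mono hm).aestronglyMeasurable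
      (hEbdd.mono fun ω h => by simpa using h) |>.congr ?_
    filter_upwards with ω; ring
  -- key identity : ∫_B Wf * E = ∫_B E ^ 2
  have hkey : ∫ ω in B, Wf ω * E ω ∂μ = ∫ ω in B, E ω ^ 2 ∂μ := by
    have hf : StronglyMeasurable[m] (B.indicator E) := hEmeas.indicator hB
    have hfg_int : Integrable (fun ω => B.indicator E ω * Wf ω) μ :=
      Integrable.bdd_mul (c := b) hWint ((hf.mono hm).aestronglyMeasurable)
        (hEbdd.mono fun ω h => by
          rw [Real.norm_eq_abs]
          by_cases hωB : ω ∈ B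
          · rwa [Set.indicator_of_mem hωB]
          · rw [Set.indicator_of_notMem hωB, abs_zero]; exact hb)
    have h1 : ∫ ω in B, Wf ω * E ω ∂μ = ∫ ω, B.indicator E ω * Wf ω ∂μ := by
      rw [← @integral_indicator Ω ℝ m0 _ _ _ _ μ hBmeas]
      congr 1
      funext ω
      by_cases hωB : ω ∈ B <;> simp [Set.indicator_apply, hωB, mul_comm]
    have h2 : ∫ ω, B.indicator E ω * Wf ω ∂μ
        = ∫ ω, (μ[fun ω' => B.indicator E ω' * Wf ω' | m]) ω ∂μ :=
      (integral_condExp hm).symm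
    have h3 : μ[fun ω' => B.indicator E ω' * Wf ω' | m]
        =ᵐ[μ] fun ω => B.indicator E ω * E ω := by
      have := condExp_mul_of_stronglyMeasurable_left hf
        (by exact hfg_int) (by exact hWint)
      exact this
    have h4 : ∫ ω, (μ[fun ω' => B.indicator E ω' * Wf ω' | m]) ω ∂μ
        = ∫ ω, B.indicator E ω * E ω ∂μ := integral_congr_ae h3
    have h5 : ∫ ω, B.indicator E ω * E ω ∂μ = ∫ ω in B, E ω ^ 2 ∂μ := by
      rw [← @integral_indicator Ω ℝ m0 _ _ _ _ μ hBmeas]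
      congr 1
      funext ω
      by_cases hωB : ω ∈ B <;> simp [Set.indicator_apply, hωB] <;> ring
    rw [h1, h2, h4, h5]
  -- expand the square
  have hexp : ∫ ω in B, (Wf ω - E ω) ^ 2 ∂μ
      = ∫ ω in B, Wf ω ^ 2 ∂μ - 2 * ∫ ω in B, Wf ω * E ω ∂μ + ∫ ω in B, E ω ^ 2 ∂μ := by
    have hptw : ∀ ω, (Wf ω - E ω) ^ 2 = Wf ω ^ 2 - 2 * (Wf ω * E ω) + E ω ^ 2 := fun ω => by
      ring
    calc ∫ ω in B, (Wf ω - E ω) ^ 2 ∂μ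
        = ∫ ω in B, (Wf ω ^ 2 - 2 * (Wf ω * E ω) + E ω ^ 2) ∂μ :=
          integral_congr_ae (ae_of_all _ fun ω => hptw ω)
      _ = ∫ ω in B, (Wf ω ^ 2 - 2 * (Wf ω * E ω)) ∂μ + ∫ ω in B, E ω ^ 2 ∂μ :=
          integral_add ((hWsq_int.sub (hWE_int.const_mul 2)).restrict) (hE2_int.restrict)
      _ = (∫ ω in B, Wf ω ^ 2 ∂μ - ∫ ω in B, 2 * (Wf ω * E ω) ∂μ) + ∫ ω in B, E ω ^ 2 ∂μ := by
          rw [integral_sub (hWsq_int.restrict) ((hWE_int.const_mul 2).restrict)]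
      _ = ∫ ω in B, Wf ω ^ 2 ∂μ - 2 * ∫ ω in B, Wf ω * E ω ∂μ + ∫ ω in B, E ω ^ 2 ∂μ := by
          rw [MeasureTheory.integral_const_mul]
  have hE2_nonneg : 0 ≤ ∫ ω in B, E ω ^ 2 ∂μ := integral_nonneg fun ω => sq_nonneg _
  have hstep1 : ∫ ω in B, (Wf ω - E ω) ^ 2 ∂μ ≤ ∫ ω in B, Wf ω ^ 2 ∂μ := by
    rw [hexp, hkey]; nlinarith [hE2_nonneg]
  have hstep2 : ∫ ω in B, Wf ω ^ 2 ∂μ ≤ a * ∫ ω in B, (μ[Nf | m]) ω ∂μ := by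
    rw [setIntegral_condExp hm hNint hB, ← MeasureTheory.integral_const_mul]
    exact integral_mono_ae hWsq_int.restrict ((hNint.const_mul a).restrict)
      (ae_of_all _ fun ω => hWsq ω)
  exact le_trans hstep1 hstep2

/-- Stopped-martingale second-moment bound: for martingale differences `D k` whose
conditional variances on predictable sets are dominated by `a ⬝ E[N k | ·]`, the sum of the
`D k` is small outside the event that the conditional sum of the `N k` is large. -/
lemma aux_mart [IsProbabilityMeasure μ] (G : ℕ → MeasurableSpace Ω)
    (hGle : ∀ k, G k ≤ m0) (hGmono : Monotone G) (K : ℕ) (D N : ℕ → Ω → ℝ)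
    (hNnn : ∀ k, 0 ≤ᵐ[μ] N k)
    (hDadp : ∀ k, StronglyMeasurable[G k] (D k))
    (hDint : ∀ k, Integrable (D k) μ)
    {b : ℝ} (hb : 0 ≤ b) (hDbdd : ∀ k, ∀ᵐ ω ∂μ, |D k ω| ≤ b)
    (hDmart : ∀ k, μ[D k | G (k - 1)] =ᵐ[μ] 0)
    {a : ℝ} (ha : 0 ≤ a)
    (hDvar : ∀ k, ∀ B : Set Ω, MeasurableSet[G (k - 1)] B →
      ∫ ω in B, (D k ω) ^ 2 ∂μ ≤ a * ∫ ω in B, (μ[N k | G (k - 1)]) ω ∂μ)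
    {C δ : ℝ} (hC : 0 < C) (hδ : 0 < δ) :
    μ {ω | δ ≤ |∑ k ∈ Finset.Icc 1 K, D k ω|}
      ≤ μ {ω | C ≤ ∑ k ∈ Finset.Icc 1 K, (μ[N k | G (k - 1)]) ω}
        + ENNReal.ofReal (a * C / δ ^ 2) := by
  classical
  set c : ℕ → Ω → ℝ := fun k => μ[N k | G (k - 1)] with hc
  set B : ℕ → Set Ω := fun k => {ω | (∑ j ∈ Finset.Icc 1 k, c j ω) < C} with hB
  have hBmeas : ∀ k, MeasurableSet[G (k - 1)] (B k) := fun k => aux_stop_meas G hGmono N C k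
  have hBmeas0 : ∀ k, MeasurableSet[m0] (B k) := fun k => hGle (k - 1) _ (hBmeas k)
  set V : ℕ → Ω → ℝ := fun k => (B k).indicator (D k) with hV
  have hVadp : ∀ k, StronglyMeasurable[G k] (V k) := fun k =>
    (hDadp k).indicator ((hGmono (Nat.sub_le k 1)) _ (hBmeas k))
  have hVint : ∀ k, Integrable (V k) μ := fun k => (hDint k).indicator (hBmeas0 k)
  have hVbdd : ∀ k, ∀ᵐ ω ∂μ, |V k ω| ≤ b := by
    intro k
    filter_upwards [hDbdd k] with ω hω
    by_cases hωB : ω ∈ B k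
    · simp only [hV]; rwa [Set.indicator_of_mem hωB]
    · simp only [hV]; rw [Set.indicator_of_notMem hωB, abs_zero]; exact hb
  have hVVint : ∀ j k, Integrable (fun ω => V j ω * V k ω) μ := fun j k =>
    Integrable.bdd_mul (c := b) (hVint k)
      (((hVadp j).mono (hGle j)).aestronglyMeasurable)
      ((hVbdd j).mono fun ω h => by rwa [Real.norm_eq_abs])
  -- cross terms vanish
  have hcross : ∀ j k, j < k → ∫ ω, V j ω * V k ω ∂μ = 0 := by
    intro j k hjk
    have hjk' : j ≤ k - 1 := Nat.le_sub_one_of_lt hjk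
    set h : Ω → ℝ := fun ω => V j ω * (B k).indicator (fun _ => (1 : ℝ)) ω with hh
    have hhmeas : StronglyMeasurable[G (k - 1)] h :=
      ((hVadp j).mono (hGmono hjk')).mul (stronglyMeasurable_const.indicator (hBmeas k))
    have hhbdd : ∀ᵐ ω ∂μ, ‖h ω‖ ≤ b := by
      filter_upwards [hVbdd j] with ω hω
      simp only [hh, Real.norm_eq_abs]
      by_cases hωB : ω ∈ B k
      · rw [Set.indicator_of_mem hωB]; simpa using hω
      · rw [Set.indicator_of_notMem hωB, mul_zero, abs_zero]; exact hb
    have hprod : ∀ ω, V j ω * V k ω = h ω * D k ω := by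
      intro ω
      simp only [hh, hV]
      by_cases hωB : ω ∈ B k
      · simp [Set.indicator_of_mem hωB]
      · simp [Set.indicator_of_notMem hωB]
    have hint_hD : Integrable (fun ω => h ω * D k ω) μ :=
      Integrable.bdd_mul (c := b) (hDint k)
        ((hhmeas.mono (hGle (k - 1))).aestronglyMeasurable) hhbdd
    have step1 : ∫ ω, V j ω * V k ω ∂μ = ∫ ω, h ω * D k ω ∂μ :=
      integral_congr_ae (ae_of_all _ hprod)
    have step2 : ∫ ω, h ω * D k ω ∂μ
        = ∫ ω, (μ[fun ω' => h ω' * D k ω' | G (k - 1)]) ω ∂μ :=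
      (integral_condExp (hGle (k - 1))).symm
    have step3 : μ[fun ω' => h ω' * D k ω' | G (k - 1)]
        =ᵐ[μ] fun ω => h ω * (μ[D k | G (k - 1)]) ω :=
      condExp_mul_of_stronglyMeasurable_left hhmeas (by exact hint_hD) (hDint k)
    have step4 : (fun ω => h ω * (μ[D k | G (k - 1)]) ω) =ᵐ[μ] (fun _ => (0 : ℝ)) := by
      filter_upwards [hDmart k] with ω hω
      simp only [Pi.zero_apply] at hω
      simp [hω]
    rw [step1, step2, integral_congr_ae (step3.trans step4)]
    simp
  -- diagonal terms
  have hdiag : ∀ k, ∫ ω, V k ω * V k ω ∂μ ≤ a * ∫ ω, (B k).indicator (c k) ω ∂μ := by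
    intro k
    have h1 : ∀ ω, V k ω * V k ω = (B k).indicator (fun ω' => (D k ω') ^ 2) ω := by
      intro ω
      simp only [hV]
      by_cases hωB : ω ∈ B k
      · simp [Set.indicator_of_mem hωB]; ring
      · simp [Set.indicator_of_notMem hωB]
    rw [integral_congr_ae (ae_of_all _ h1),
      @integral_indicator Ω ℝ m0 _ _ _ _ μ (hBmeas0 k),
      @integral_indicator Ω ℝ m0 _ _ _ _ μ (hBmeas0 k)]
    exact hDvar k (B k) (hBmeas k)
  -- second moment of the stopped sum
  have hsum_int : Integrable (fun ω => (∑ k ∈ Finset.Icc 1 K, V k ω) ^ 2) μ := by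
    have : ∀ ω, (∑ k ∈ Finset.Icc 1 K, V k ω) ^ 2
        = ∑ j ∈ Finset.Icc 1 K, ∑ k ∈ Finset.Icc 1 K, V j ω * V k ω := by
      intro ω; rw [sq, Finset.sum_mul_sum]
    rw [funext this]
    exact integrable_finset_sum _ (fun j _ => integrable_finset_sum _ (fun k _ => hVVint j k))
  have hmoment : ∫ ω, (∑ k ∈ Finset.Icc 1 K, V k ω) ^ 2 ∂μ ≤ a * C := by
    have hexp : ∫ ω, (∑ k ∈ Finset.Icc 1 K, V k ω) ^ 2 ∂μ
        = ∑ j ∈ Finset.Icc 1 K, ∑ k ∈ Finset.Icc 1 K, ∫ ω, V j ω * V k ω ∂μ := by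
      have h1 : ∀ ω, (∑ k ∈ Finset.Icc 1 K, V k ω) ^ 2
          = ∑ j ∈ Finset.Icc 1 K, ∑ k ∈ Finset.Icc 1 K, V j ω * V k ω := by
        intro ω; rw [sq, Finset.sum_mul_sum]
      rw [integral_congr_ae (ae_of_all _ h1),
        integral_finset_sum _ (fun j _ => integrable_finset_sum _ (fun k _ => hVVint j k))]
      exact Finset.sum_congr rfl fun j _ =>
        integral_finset_sum _ (fun k _ => hVVint j k)
    have hdiagsum : ∑ j ∈ Finset.Icc 1 K, ∑ k ∈ Finset.Icc 1 K, ∫ ω, V j ω * V k ω ∂μ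
        = ∑ k ∈ Finset.Icc 1 K, ∫ ω, V k ω * V k ω ∂μ := by
      refine Finset.sum_congr rfl fun j hj => ?_
      refine Finset.sum_eq_single j (fun k hk hkj => ?_) (fun hj' => absurd hj hj')
      rcases lt_or_gt_of_ne (Ne.symm hkj) with h | h
      · exact hcross j k h
      · rw [integral_congr_ae (ae_of_all _ (fun ω => mul_comm (V j ω) (V k ω)))]
        exact hcross k j h
    have hfinal : ∑ k ∈ Finset.Icc 1 K, ∫ ω, V k ω * V k ω ∂μ
        ≤ a * ∫ ω, ∑ k ∈ Finset.Icc 1 K, (B k).indicator (c k) ω ∂μ := by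
      rw [integral_finset_sum _ (fun k _ =>
        (integrable_condExp (f := N k) (m := G (k - 1))).indicator (hBmeas0 k)),
        Finset.mul_sum]
      exact Finset.sum_le_sum fun k _ => hdiag k
    have hlast : ∫ ω, ∑ k ∈ Finset.Icc 1 K, (B k).indicator (c k) ω ∂μ ≤ C := by
      have hbound := aux_stopped_cond_sum_le (μ := μ) G K N (hNnn) (le_of_lt hC)
      calc ∫ ω, ∑ k ∈ Finset.Icc 1 K, (B k).indicator (c k) ω ∂μ
          ≤ ∫ _ω, C ∂μ := by
            refine integral_mono_ae (integrable_finset_sum _ (fun k _ =>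
              (integrable_condExp (f := N k) (m := G (k - 1))).indicator (hBmeas0 k)))
              (integrable_const C) ?_
            filter_upwards [hbound] with ω hω
            convert hω using 2
        _ = C := by simp
    calc ∫ ω, (∑ k ∈ Finset.Icc 1 K, V k ω) ^ 2 ∂μ
        = ∑ k ∈ Finset.Icc 1 K, ∫ ω, V k ω * V k ω ∂μ := by rw [hexp, hdiagsum]
      _ ≤ a * ∫ ω, ∑ k ∈ Finset.Icc 1 K, (B k).indicator (c k) ω ∂μ := hfinal
      _ ≤ a * C := mul_le_mul_of_nonneg_left hlast ha
  -- a.e. inclusion into the union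
  set S2 : Set Ω := {ω | C ≤ ∑ k ∈ Finset.Icc 1 K, c k ω} with hS2
  set S3 : Set Ω := {ω | δ ≤ |∑ k ∈ Finset.Icc 1 K, V k ω|} with hS3
  set Su : Set Ω := S2 ∪ S3 with hSu
  have hsub : ({ω | δ ≤ |∑ k ∈ Finset.Icc 1 K, D k ω|} : Set Ω) ≤ᵐ[μ] Su := by
    have h0 : ∀ᵐ ω ∂μ, ∀ k ∈ Finset.Icc 1 K, 0 ≤ c k ω :=
      aux_ae_finset (fun k _ => condExp_nonneg (hNnn k))
    filter_upwards [h0] with ω hω hmem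
    by_cases hPK : C ≤ ∑ k ∈ Finset.Icc 1 K, c k ω
    · exact Or.inl hPK
    · refine Or.inr ?_
      push_neg at hPK
      have hWeq : ∑ k ∈ Finset.Icc 1 K, V k ω = ∑ k ∈ Finset.Icc 1 K, D k ω := by
        refine Finset.sum_congr rfl (fun k hk => ?_)
        have hk' : k ≤ K := (Finset.mem_Icc.mp hk).2
        have hsub' : Finset.Icc 1 k ⊆ Finset.Icc 1 K := Finset.Icc_subset_Icc le_rfl hk'
        have hmono : (∑ j ∈ Finset.Icc 1 k, c j ω) ≤ ∑ j ∈ Finset.Icc 1 K, c j ω :=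
          Finset.sum_le_sum_of_subset_of_nonneg hsub' (fun j hj _ => hω j hj)
        have hmemB : ω ∈ B k := lt_of_le_of_lt hmono hPK
        simp only [hV]
        simp [Set.indicator_of_mem hmemB]
      show δ ≤ |∑ k ∈ Finset.Icc 1 K, V k ω|
      rw [hWeq]
      exact hmem
  have hMarkov : μ S3 ≤ ENNReal.ofReal (a * C / δ ^ 2) := by
    refine le_trans (aux_markov hsum_int hδ) (ENNReal.ofReal_le_ofReal ?_)
    exact div_le_div_of_nonneg_right hmoment (by positivity) |>.trans (le_refl _)
  calc μ {ω | δ ≤ |∑ k ∈ Finset.Icc 1 K, D k ω|}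
      ≤ μ Su := measure_mono_ae hsub
    _ = μ (S2 ∪ S3) := by rw [hSu]
    _ ≤ μ S2 + μ S3 := measure_union_le _ _
    _ ≤ μ S2 + ENNReal.ofReal (a * C / δ ^ 2) := add_le_add le_rfl hMarkov

lemma aux_coord_abs {d : ℕ} (x : EuclideanSpace ℝ (Fin d)) (l : Fin d) : |x l| ≤ ‖x‖ := by
  rw [EuclideanSpace.norm_eq, ← Real.sqrt_sq (abs_nonneg (x l))]
  apply Real.sqrt_le_sqrt
  rw [sq_abs]
  have := Finset.single_le_sum (f := fun m => ‖x m‖ ^ 2) (fun m _ => sq_nonneg _)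
    (Finset.mem_univ l)
  simpa [Real.norm_eq_abs, sq_abs] using this

lemma aux_norm_sq {d : ℕ} (x : EuclideanSpace ℝ (Fin d)) : ‖x‖ ^ 2 = ∑ l, x l ^ 2 := by
  rw [EuclideanSpace.norm_eq, Real.sq_sqrt (Finset.sum_nonneg fun m _ => sq_nonneg _)]
  simp [Real.norm_eq_abs, sq_abs]


end Aux

/-- For a square-integrable adapted triangular array, the conditional Lindeberg condition (CLB^d)
together with the norming condition (N^d) (convergence in probability of the sums of conditional
covariance matrices to a random psd matrix `A`) implies Raikov's condition (R^d):
`∑_k X_{nk} X_{nk}ᵀ → A` in probability (entrywise). -/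
theorem stmt5 {Ω : Type*} {m0 : MeasurableSpace Ω} (μ : Measure Ω) [IsProbabilityMeasure μ]
    {d : ℕ} (kn : ℕ → ℕ)
    (𝓕 : ℕ → ℕ → MeasurableSpace Ω)
    (hFmono : ∀ n, Monotone (𝓕 n)) (hFle : ∀ n k, 𝓕 n k ≤ m0)
    (X : ℕ → ℕ → Ω → EuclideanSpace ℝ (Fin d))
    (hadapted : ∀ n k, StronglyMeasurable[𝓕 n k] (X n k))
    (hL2 : ∀ n k, MemLp (X n k) 2 μ)
    (hCLB : ∀ ε > (0 : ℝ), TendstoInMeasure μ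
      (fun n ω => ∑ k ∈ Finset.Icc 1 (kn n),
        (μ[Set.indicator {ω'' | ε ≤ ‖X n k ω''‖} (fun ω'' => ‖X n k ω''‖ ^ 2) | 𝓕 n (k - 1)]) ω)
      atTop (fun _ => 0))
    (A : Ω → Matrix (Fin d) (Fin d) ℝ) (hAmeas : ∀ i j : Fin d, Measurable (fun ω => A ω i j))
    (hApsd : ∀ ω, (A ω).PosSemidef)
    (hN : ∀ i j : Fin d, TendstoInMeasure μ
      (fun n ω => ∑ k ∈ Finset.Icc 1 (kn n),
        (μ[fun ω' => X n k ω' i * X n k ω' j | 𝓕 n (k - 1)]) ω)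
      atTop (fun ω => A ω i j)) :
    ∀ i j : Fin d, TendstoInMeasure μ
      (fun n ω => ∑ k ∈ Finset.Icc 1 (kn n), X n k ω i * X n k ω j)
      atTop (fun ω => A ω i j) := by
  classical
  intro i j
  -- coordinates and basic integrability
  have hproj : ∀ (l : Fin d) n k, StronglyMeasurable[𝓕 n k] (fun ω => X n k ω l) :=
    fun l n k => (EuclideanSpace.proj l).continuous.comp_stronglyMeasurable (hadapted n k)
  have hprojL2 : ∀ (l : Fin d) n k, MemLp (fun ω => X n k ω l) 2 μ := fun l n k =>
    MemLp.of_le (hL2 n k) (((hproj l n k).mono (hFle n k)).aestronglyMeasurable)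
      (ae_of_all μ fun ω => by
        rw [Real.norm_eq_abs]; exact aux_coord_abs (X n k ω) l)
  set Nf : ℕ → ℕ → Ω → ℝ := fun n k ω => ‖X n k ω‖ ^ 2 with hNfdef
  have hNint : ∀ n k, Integrable (Nf n k) μ := fun n k => ((hL2 n k).norm).integrable_sq
  have hNnn : ∀ n k ω, 0 ≤ Nf n k ω := fun n k ω => sq_nonneg _
  set Y : ℕ → ℕ → Ω → ℝ := fun n k ω => X n k ω i * X n k ω j with hYdef
  have hYabs : ∀ n k ω, |Y n k ω| ≤ Nf n k ω := by
    intro n k ω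
    calc |Y n k ω| = |X n k ω i| * |X n k ω j| := abs_mul _ _
      _ ≤ ‖X n k ω‖ * ‖X n k ω‖ :=
          mul_le_mul (aux_coord_abs _ i) (aux_coord_abs _ j) (abs_nonneg _) (norm_nonneg _)
      _ = Nf n k ω := by rw [hNfdef]; ring
  have hYsm : ∀ n k, StronglyMeasurable[𝓕 n k] (Y n k) := fun n k =>
    (hproj i n k).mul (hproj j n k)
  have hYint : ∀ n k, Integrable (Y n k) μ := fun n k =>
    Integrable.mono' (hNint n k) ((hYsm n k).mono (hFle n k)).aestronglyMeasurable
      (ae_of_all μ fun ω => by rw [Real.norm_eq_abs]; exact hYabs n k ω)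
  -- products of arbitrary coordinates are integrable
  have hprod_int : ∀ (l l' : Fin d) n k,
      Integrable (fun ω => X n k ω l * X n k ω l') μ := by
    intro l l' n k
    refine Integrable.mono' (hNint n k)
      (((hproj l n k).mul (hproj l' n k)).mono (hFle n k)).aestronglyMeasurable
      (ae_of_all μ fun ω => ?_)
    rw [Real.norm_eq_abs]
    calc |X n k ω l * X n k ω l'| = |X n k ω l| * |X n k ω l'| := abs_mul _ _
      _ ≤ ‖X n k ω‖ * ‖X n k ω‖ :=
          mul_le_mul (aux_coord_abs _ l) (aux_coord_abs _ l') (abs_nonneg _) (norm_nonneg _)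
      _ = Nf n k ω := by rw [hNfdef]; ring
  -- conditional sums of Nf converge to the trace of A
  set trA : Ω → ℝ := fun ω => ∑ l, A ω l l with htrAdef
  have hQtoA : TendstoInMeasure μ
      (fun n ω => ∑ k ∈ Finset.Icc 1 (kn n), (μ[Nf n k | 𝓕 n (k - 1)]) ω) atTop trA := by
    have h1 := aux_tim_finset_sum (μ := μ) (Finset.univ : Finset (Fin d))
      (f := fun l n ω => ∑ k ∈ Finset.Icc 1 (kn n),
        (μ[fun ω' => X n k ω' l * X n k ω' l | 𝓕 n (k - 1)]) ω)
      (F := fun l ω => A ω l l) (fun l _ => hN l l)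
    refine TendstoInMeasure.congr (fun n => ?_) (ae_of_all μ fun ω => rfl) h1
    -- swap sums and use linearity of condExp
    have hper : ∀ k ∈ Finset.Icc 1 (kn n), ∀ᵐ ω ∂μ,
        (μ[Nf n k | 𝓕 n (k - 1)]) ω
          = ∑ l, (μ[fun ω' => X n k ω' l * X n k ω' l | 𝓕 n (k - 1)]) ω := by
      intro k _
      have hfun : Nf n k = ∑ l : Fin d, (fun ω' => X n k ω' l * X n k ω' l) := by
        funext ω
        rw [Finset.sum_apply]
        rw [hNfdef]
        simp only []
        rw [aux_norm_sq (X n k ω)]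
        exact Finset.sum_congr rfl fun l _ => sq (X n k ω l) ▸ (sq (X n k ω l)).symm ▸ rfl
      have := condExp_finset_sum (μ := μ) (m := 𝓕 n (k - 1))
        (s := (Finset.univ : Finset (Fin d)))
        (f := fun l => fun ω' => X n k ω' l * X n k ω' l)
        (fun l _ => hprod_int l l n k)
      rw [hfun]
      filter_upwards [this] with ω hω
      rw [hω, Finset.sum_apply]
    have hall := aux_ae_finset (μ := μ) hper
    filter_upwards [hall] with ω hω
    rw [Finset.sum_comm]
    exact (Finset.sum_congr rfl fun k hk => (hω k hk).symm)
  -- main step: the compensated sums tend to zero in measure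
  have hT : TendstoInMeasure μ
      (fun n ω => ∑ k ∈ Finset.Icc 1 (kn n), (Y n k ω - (μ[Y n k | 𝓕 n (k - 1)]) ω))
      atTop (fun _ => 0) := by
    rw [tendstoInMeasure_iff_dist]
    intro δ hδ
    rw [ENNReal.tendsto_atTop_zero]
    intro ρ hρ
    have hδ3 : 0 < δ / 3 := by positivity
    have hρ8 : (0 : ENNReal) < ρ / 8 := ENNReal.div_pos hρ.ne' (by norm_num)
    -- tightness of the trace
    obtain ⟨C₀, hC₀⟩ : ∃ C₀ : ℕ, μ {ω | (C₀ : ℝ) ≤ trA ω} < ρ / 8 := by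
      have hmeas_trA : Measurable trA := by
        rw [htrAdef]; exact Finset.measurable_sum _ fun l _ => hAmeas l l
      have hanti : Antitone (fun m : ℕ => {ω | (m : ℝ) ≤ trA ω}) := by
        intro m1 m2 h12 ω hω
        have hc : (m1 : ℝ) ≤ (m2 : ℝ) := Nat.cast_le.mpr h12
        exact le_trans hc hω
      have hinter : ⋂ m : ℕ, {ω | (m : ℝ) ≤ trA ω} = ∅ := by
        ext ω
        simp only [Set.mem_iInter, Set.mem_setOf_eq, Set.mem_empty_iff_false, iff_false,
          not_forall]
        obtain ⟨m, hm⟩ := exists_nat_gt (trA ω)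
        exact ⟨m, not_le.mpr hm⟩
      have htend := tendsto_measure_iInter_atTop (μ := μ)
        (s := fun m : ℕ => {ω | (m : ℝ) ≤ trA ω})
        (fun m => (measurableSet_le measurable_const hmeas_trA).nullMeasurableSet) hanti
        ⟨0, measure_ne_top μ _⟩
      rw [hinter, measure_empty] at htend
      exact (htend.eventually_lt_const hρ8).exists
    set C : ℝ := (C₀ : ℝ) + 1 with hCdef
    have hCpos : 0 < C := by positivity
    -- truncation level
    set r : ℝ := (min (ρ / 8) 1).toReal with hrdef
    have hmin_ne_top : min (ρ / 8) 1 ≠ ⊤ := ne_top_of_le_ne_top (by norm_num) (min_le_right _ _)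
    have hmin_pos : (0 : ENNReal) < min (ρ / 8) 1 := lt_min hρ8 (by norm_num)
    have hr_pos : 0 < r := ENNReal.toReal_pos hmin_pos.ne' hmin_ne_top
    have hofr : ENNReal.ofReal r ≤ ρ / 8 := by
      rw [hrdef, ENNReal.ofReal_toReal hmin_ne_top]; exact min_le_left _ _
    set ε : ℝ := Real.sqrt (r * (δ / 3) ^ 2 / C) with hεdef
    have hε : 0 < ε := Real.sqrt_pos.2 (by positivity)
    have hε2 : ε ^ 2 = r * (δ / 3) ^ 2 / C := Real.sq_sqrt (by positivity)
    have hεC : ε ^ 2 * C / (δ / 3) ^ 2 = r := by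
      rw [hε2]; field_simp
    -- truncated objects
    set Zt : ℕ → ℕ → Ω → ℝ := fun n k =>
      Set.indicator {ω'' | ε ≤ ‖X n k ω''‖} (fun ω'' => ‖X n k ω''‖ ^ 2) with hZtdef
    set Yt : ℕ → ℕ → Ω → ℝ := fun n k =>
      Set.indicator {ω'' | ε ≤ ‖X n k ω''‖} (Y n k) with hYtdef
    set Wt : ℕ → ℕ → Ω → ℝ := fun n k ω => Y n k ω - Yt n k ω with hWtdef
    set Dm : ℕ → ℕ → Ω → ℝ := fun n k ω => Wt n k ω - (μ[Wt n k | 𝓕 n (k - 1)]) ω with hDmdef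
    have htail_meas : ∀ n k, MeasurableSet[𝓕 n k] {ω'' | ε ≤ ‖X n k ω''‖} := fun n k =>
      measurableSet_le measurable_const (hadapted n k).norm.measurable
    have htail_meas0 : ∀ n k, MeasurableSet[m0] {ω'' | ε ≤ ‖X n k ω''‖} := fun n k =>
      hFle n k _ (htail_meas n k)
    have hZt_int : ∀ n k, Integrable (Zt n k) μ := fun n k =>
      (hNint n k).indicator (htail_meas0 n k)
    have hZt_nn : ∀ n k ω, 0 ≤ Zt n k ω := fun n k ω =>
      Set.indicator_apply_nonneg (fun _ => sq_nonneg _)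
    have hYt_int : ∀ n k, Integrable (Yt n k) μ := fun n k =>
      (hYint n k).indicator (htail_meas0 n k)
    have hYt_abs : ∀ n k ω, |Yt n k ω| ≤ Zt n k ω := by
      intro n k ω
      simp only [hYtdef, hZtdef]
      by_cases hωt : ω ∈ {ω'' | ε ≤ ‖X n k ω''‖}
      · rw [Set.indicator_of_mem hωt, Set.indicator_of_mem hωt]
        exact hYabs n k ω
      · rw [Set.indicator_of_notMem hωt, Set.indicator_of_notMem hωt, abs_zero]
    have hWt_int : ∀ n k, Integrable (Wt n k) μ := fun n k => (hYint n k).sub (hYt_int n k)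
    have hWt_sm : ∀ n k, StronglyMeasurable[𝓕 n k] (Wt n k) := fun n k =>
      (hYsm n k).sub ((hYsm n k).indicator (htail_meas n k))
    have hWt_abs : ∀ n k ω, |Wt n k ω| ≤ ε ^ 2 := by
      intro n k ω
      simp only [hWtdef, hYtdef]
      by_cases hωt : ω ∈ {ω'' | ε ≤ ‖X n k ω''‖}
      · rw [Set.indicator_of_mem hωt, sub_self, abs_zero]; positivity
      · rw [Set.indicator_of_notMem hωt, sub_zero]
        have hlt : ‖X n k ω‖ < ε := not_le.mp hωt
        refine le_trans (hYabs n k ω) ?_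
        have := norm_nonneg (X n k ω)
        simp only [hNfdef]
        nlinarith
    have hWt_sq : ∀ n k ω, Wt n k ω ^ 2 ≤ ε ^ 2 * Nf n k ω := by
      intro n k ω
      have h1 : |Wt n k ω| ≤ ε ^ 2 := hWt_abs n k ω
      simp only [hWtdef, hYtdef] at *
      by_cases hωt : ω ∈ {ω'' | ε ≤ ‖X n k ω''‖}
      · rw [Set.indicator_of_mem hωt, sub_self]
        simpa using mul_nonneg (sq_nonneg ε) (hNnn n k ω)
      · rw [Set.indicator_of_notMem hωt, sub_zero]
        have hlt : ‖X n k ω‖ < ε := not_le.mp hωt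
        have habs := hYabs n k ω
        have hN0 := hNnn n k ω
        have h2 : Y n k ω ^ 2 ≤ Nf n k ω ^ 2 := by
          rw [← sq_abs (Y n k ω)]
          exact pow_le_pow_left₀ (abs_nonneg _) habs 2
        have h3 : Nf n k ω ≤ ε ^ 2 := by
          show ‖X n k ω‖ ^ 2 ≤ ε ^ 2
          nlinarith [norm_nonneg (X n k ω)]
        nlinarith
    have hDm_sm : ∀ n k, StronglyMeasurable[𝓕 n k] (Dm n k) := fun n k =>
      (hWt_sm n k).sub (stronglyMeasurable_condExp.mono (hFmono n (Nat.sub_le k 1)))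
    have hDm_int : ∀ n k, Integrable (Dm n k) μ := fun n k =>
      (hWt_int n k).sub integrable_condExp
    have hDm_bdd : ∀ n k, ∀ᵐ ω ∂μ, |Dm n k ω| ≤ 2 * ε ^ 2 := by
      intro n k
      have hE := aux_condExp_bdd (μ := μ) (hFle n (k - 1)) (hWt_int n k)
        (ae_of_all μ (hWt_abs n k))
      filter_upwards [hE] with ω hω
      simp only [hDmdef]
      calc |Wt n k ω - (μ[Wt n k | 𝓕 n (k - 1)]) ω|
          ≤ |Wt n k ω| + |(μ[Wt n k | 𝓕 n (k - 1)]) ω| := abs_sub _ _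
        _ ≤ ε ^ 2 + ε ^ 2 := add_le_add (hWt_abs n k ω) hω
        _ = 2 * ε ^ 2 := by ring
    have hDm_mart : ∀ n k, μ[Dm n k | 𝓕 n (k - 1)] =ᵐ[μ] 0 := by
      intro n k
      have heq : Dm n k = Wt n k - μ[Wt n k | 𝓕 n (k - 1)] := rfl
      rw [heq]
      have h1 := condExp_sub (m := 𝓕 n (k - 1)) (hWt_int n k)
        (integrable_condExp (f := Wt n k) (m := 𝓕 n (k - 1)))
      have h2 := condExp_condExp_of_le (le_refl (𝓕 n (k - 1))) (hFle n (k - 1))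
        (f := Wt n k) (μ := μ)
      filter_upwards [h1, h2] with ω hω1 hω2
      rw [hω1]
      simp only [Pi.sub_apply, Pi.zero_apply]
      rw [hω2]
      ring
    have hDm_var : ∀ n k, ∀ B : Set Ω, MeasurableSet[𝓕 n (k - 1)] B →
        ∫ ω in B, (Dm n k ω) ^ 2 ∂μ ≤ ε ^ 2 * ∫ ω in B, (μ[Nf n k | 𝓕 n (k - 1)]) ω ∂μ :=
      fun n k B hB =>
        aux_var_bound (μ := μ) (hFle n (k - 1)) (hWt_int n k)
          (((hWt_sm n k).mono (hFle n k)).aestronglyMeasurable)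
          (b := ε ^ 2) (by positivity) (hWt_abs n k) (hWt_sq n k) (hNint n k) hB
    -- martingale bound, for every n
    have key1 : ∀ n, μ {ω | δ / 3 ≤ |∑ k ∈ Finset.Icc 1 (kn n), Dm n k ω|}
        ≤ μ {ω | C ≤ ∑ k ∈ Finset.Icc 1 (kn n), (μ[Nf n k | 𝓕 n (k - 1)]) ω}
          + ENNReal.ofReal r := by
      intro n
      have h := aux_mart (μ := μ) (𝓕 n) (hFle n) (hFmono n) (kn n) (Dm n) (Nf n)
        (fun k => ae_of_all μ (hNnn n k)) (hDm_sm n) (hDm_int n)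
        (b := 2 * ε ^ 2) (by positivity) (hDm_bdd n) (hDm_mart n)
        (a := ε ^ 2) (sq_nonneg ε) (hDm_var n) hCpos hδ3
      rwa [hεC] at h
    -- the conditional-sum-large event
    have key2 : ∀ n, μ {ω | C ≤ ∑ k ∈ Finset.Icc 1 (kn n), (μ[Nf n k | 𝓕 n (k - 1)]) ω}
        ≤ μ {ω | (C₀ : ℝ) ≤ trA ω}
          + μ {ω | 1 ≤ dist (∑ k ∈ Finset.Icc 1 (kn n), (μ[Nf n k | 𝓕 n (k - 1)]) ω) (trA ω)} := by
      intro n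
      refine le_trans (measure_mono ?_) (measure_union_le _ _)
      intro ω hω
      simp only [Set.mem_setOf_eq] at hω
      by_cases h1 : 1 ≤ dist (∑ k ∈ Finset.Icc 1 (kn n), (μ[Nf n k | 𝓕 n (k - 1)]) ω) (trA ω)
      · exact Or.inr h1
      · refine Or.inl ?_
        push_neg at h1
        rw [Real.dist_eq] at h1
        simp only [Set.mem_setOf_eq]
        have := abs_lt.mp h1
        rw [hCdef] at hω
        linarith [this.1, this.2]
    -- eventual bounds
    have hev1 : ∀ᶠ n in atTop, μ {ω | 1 ≤ dist
        (∑ k ∈ Finset.Icc 1 (kn n), (μ[Nf n k | 𝓕 n (k - 1)]) ω) (trA ω)} < ρ / 8 :=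
      (tendstoInMeasure_iff_dist.mp hQtoA 1 one_pos).eventually_lt_const hρ8
    have hCLBe := hCLB ε hε
    have hZtcond : TendstoInMeasure μ
        (fun n ω => ∑ k ∈ Finset.Icc 1 (kn n), (μ[Zt n k | 𝓕 n (k - 1)]) ω)
        atTop (fun _ => 0) := hCLBe
    have hZtsum := aux_tim_of_cond (μ := μ) 𝓕 hFmono hFle kn Zt
      (fun n k => ae_of_all μ (hZt_nn n k)) hZt_int hZtcond
    have hev2 : ∀ᶠ n in atTop, μ {ω | δ / 3 ≤ dist
        (∑ k ∈ Finset.Icc 1 (kn n), Zt n k ω) 0} < ρ / 8 :=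
      (tendstoInMeasure_iff_dist.mp hZtsum (δ / 3) hδ3).eventually_lt_const hρ8
    have hev3 : ∀ᶠ n in atTop, μ {ω | δ / 3 ≤ dist
        (∑ k ∈ Finset.Icc 1 (kn n), (μ[Zt n k | 𝓕 n (k - 1)]) ω) 0} < ρ / 8 :=
      (tendstoInMeasure_iff_dist.mp hZtcond (δ / 3) hδ3).eventually_lt_const hρ8
    -- a.e. decomposition of the compensated sum
    have hdecomp : ∀ n, ∀ᵐ ω ∂μ,
        |∑ k ∈ Finset.Icc 1 (kn n), (Y n k ω - (μ[Y n k | 𝓕 n (k - 1)]) ω)|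
          ≤ |∑ k ∈ Finset.Icc 1 (kn n), Dm n k ω|
            + (∑ k ∈ Finset.Icc 1 (kn n), Zt n k ω)
            + (∑ k ∈ Finset.Icc 1 (kn n), (μ[Zt n k | 𝓕 n (k - 1)]) ω) := by
      intro n
      have hper : ∀ k ∈ Finset.Icc 1 (kn n), ∀ᵐ ω ∂μ,
          ((μ[Y n k | 𝓕 n (k - 1)]) ω
            = (μ[Wt n k | 𝓕 n (k - 1)]) ω + (μ[Yt n k | 𝓕 n (k - 1)]) ω)
          ∧ |(μ[Yt n k | 𝓕 n (k - 1)]) ω| ≤ (μ[Zt n k | 𝓕 n (k - 1)]) ω := by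
        intro k _
        have hYeq : Wt n k + Yt n k = Y n k := by
          funext ω; simp only [Pi.add_apply, hWtdef]; ring
        have hadd := condExp_add (m := 𝓕 n (k - 1)) (hWt_int n k) (hYt_int n k)
        rw [hYeq] at hadd
        have hup := condExp_mono (m := 𝓕 n (k - 1)) (hYt_int n k) (hZt_int n k)
          (ae_of_all μ fun ω => le_trans (le_abs_self _) (hYt_abs n k ω))
        have hlow := condExp_mono (m := 𝓕 n (k - 1)) ((hZt_int n k).neg) (hYt_int n k)
          (ae_of_all μ fun ω => by
            have := hYt_abs n k ω
            simp only [Pi.neg_apply]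
            linarith [neg_abs_le (Yt n k ω)])
        have hneg := condExp_neg (μ := μ) (m := 𝓕 n (k - 1)) (Zt n k)
        filter_upwards [hadd, hup, hlow, hneg] with ω h1 h2 h3 h4
        refine ⟨by rw [h1]; simp, ?_⟩
        rw [abs_le]
        constructor
        · have : (μ[-Zt n k | 𝓕 n (k - 1)]) ω ≤ (μ[Yt n k | 𝓕 n (k - 1)]) ω := h3
          rw [h4] at this
          simpa using this
        · exact h2
      have hall := aux_ae_finset (μ := μ) hper
      filter_upwards [hall] with ω hω
      have hsplit : ∑ k ∈ Finset.Icc 1 (kn n), (Y n k ω - (μ[Y n k | 𝓕 n (k - 1)]) ω)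
          = (∑ k ∈ Finset.Icc 1 (kn n), Dm n k ω)
            + ((∑ k ∈ Finset.Icc 1 (kn n), Yt n k ω)
              - (∑ k ∈ Finset.Icc 1 (kn n), (μ[Yt n k | 𝓕 n (k - 1)]) ω)) := by
        rw [← Finset.sum_sub_distrib, ← Finset.sum_add_distrib]
        refine Finset.sum_congr rfl fun k hk => ?_
        rw [(hω k hk).1]
        simp only [hDmdef, hWtdef]
        ring
      rw [hsplit]
      have habs1 : |(∑ k ∈ Finset.Icc 1 (kn n), Yt n k ω)
          - (∑ k ∈ Finset.Icc 1 (kn n), (μ[Yt n k | 𝓕 n (k - 1)]) ω)|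
          ≤ (∑ k ∈ Finset.Icc 1 (kn n), Zt n k ω)
            + (∑ k ∈ Finset.Icc 1 (kn n), (μ[Zt n k | 𝓕 n (k - 1)]) ω) := by
        refine le_trans (abs_sub _ _) (add_le_add ?_ ?_)
        · refine le_trans (Finset.abs_sum_le_sum_abs _ _) (Finset.sum_le_sum fun k hk => ?_)
          exact hYt_abs n k ω
        · refine le_trans (Finset.abs_sum_le_sum_abs _ _) (Finset.sum_le_sum fun k hk => ?_)
          exact (hω k hk).2
      calc |(∑ k ∈ Finset.Icc 1 (kn n), Dm n k ω)
          + ((∑ k ∈ Finset.Icc 1 (kn n), Yt n k ω)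
            - (∑ k ∈ Finset.Icc 1 (kn n), (μ[Yt n k | 𝓕 n (k - 1)]) ω))|
          ≤ |∑ k ∈ Finset.Icc 1 (kn n), Dm n k ω|
            + |(∑ k ∈ Finset.Icc 1 (kn n), Yt n k ω)
              - (∑ k ∈ Finset.Icc 1 (kn n), (μ[Yt n k | 𝓕 n (k - 1)]) ω)| := abs_add_le _ _
        _ ≤ _ := by
            rw [add_assoc]
            exact add_le_add le_rfl habs1
    -- combine all eventual bounds
    rw [eventually_atTop] at hev1 hev2 hev3
    obtain ⟨N1, hN1⟩ := hev1
    obtain ⟨N2, hN2⟩ := hev2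
    obtain ⟨N3, hN3⟩ := hev3
    refine ⟨max N1 (max N2 N3), fun n hn => ?_⟩
    have hn1 : N1 ≤ n := le_trans (le_max_left _ _) hn
    have hn2 : N2 ≤ n := le_trans (le_max_left _ _) (le_trans (le_max_right _ _) hn)
    have hn3 : N3 ≤ n := le_trans (le_max_right _ _) (le_trans (le_max_right _ _) hn)
    -- the union bound
    set U1 : Set Ω := {ω | δ / 3 ≤ |∑ k ∈ Finset.Icc 1 (kn n), Dm n k ω|} with hU1
    set U2 : Set Ω := {ω | δ / 3 ≤ ∑ k ∈ Finset.Icc 1 (kn n), Zt n k ω} with hU2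
    set U3 : Set Ω :=
      {ω | δ / 3 ≤ ∑ k ∈ Finset.Icc 1 (kn n), (μ[Zt n k | 𝓕 n (k - 1)]) ω} with hU3
    set Uu : Set Ω := U1 ∪ (U2 ∪ U3) with hUu
    have hsubU : ({ω | δ ≤ dist
        (∑ k ∈ Finset.Icc 1 (kn n), (Y n k ω - (μ[Y n k | 𝓕 n (k - 1)]) ω)) 0} : Set Ω)
        ≤ᵐ[μ] Uu := by
      filter_upwards [hdecomp n] with ω hω hmem
      have hd0 : δ ≤
          dist (∑ k ∈ Finset.Icc 1 (kn n), (Y n k ω - (μ[Y n k | 𝓕 n (k - 1)]) ω)) 0 := hmem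
      rw [Real.dist_eq, sub_zero] at hd0
      have hd := hd0
      by_contra hcon
      have hcon' : ¬ (ω ∈ U1 ∨ (ω ∈ U2 ∨ ω ∈ U3)) := hcon
      push_neg at hcon'
      obtain ⟨hc1, hc2, hc3⟩ := hcon'
      have hc1' : δ / 3 > |∑ k ∈ Finset.Icc 1 (kn n), Dm n k ω| :=
        lt_of_not_ge (fun h => hc1 h)
      have hc2' : δ / 3 > ∑ k ∈ Finset.Icc 1 (kn n), Zt n k ω :=
        lt_of_not_ge (fun h => hc2 h)
      have hc3' : δ / 3 > ∑ k ∈ Finset.Icc 1 (kn n), (μ[Zt n k | 𝓕 n (k - 1)]) ω :=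
        lt_of_not_ge (fun h => hc3 h)
      linarith
    have hU2sub : μ U2 ≤ μ {ω | δ / 3 ≤ dist (∑ k ∈ Finset.Icc 1 (kn n), Zt n k ω) 0} := by
      refine measure_mono fun ω hω => ?_
      simp only [hU2, Set.mem_setOf_eq] at hω ⊢
      rw [Real.dist_eq, sub_zero]
      exact le_trans hω (le_abs_self _)
    have hU3sub : μ U3 ≤ μ {ω | δ / 3 ≤ dist
        (∑ k ∈ Finset.Icc 1 (kn n), (μ[Zt n k | 𝓕 n (k - 1)]) ω) 0} := by
      refine measure_mono fun ω hω => ?_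
      simp only [hU3, Set.mem_setOf_eq] at hω ⊢
      rw [Real.dist_eq, sub_zero]
      exact le_trans hω (le_abs_self _)
    have hU1bound : μ U1 ≤ ρ / 8 + ρ / 8 + ρ / 8 := by
      calc μ U1 ≤ μ {ω | C ≤ ∑ k ∈ Finset.Icc 1 (kn n), (μ[Nf n k | 𝓕 n (k - 1)]) ω}
            + ENNReal.ofReal r := key1 n
        _ ≤ (μ {ω | (C₀ : ℝ) ≤ trA ω}
            + μ {ω | 1 ≤ dist (∑ k ∈ Finset.Icc 1 (kn n), (μ[Nf n k | 𝓕 n (k - 1)]) ω)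
              (trA ω)}) + ENNReal.ofReal r := add_le_add (key2 n) le_rfl
        _ ≤ (ρ / 8 + ρ / 8) + ρ / 8 :=
            add_le_add (add_le_add hC₀.le (hN1 n hn1).le) hofr
    calc μ {ω | δ ≤
          dist (∑ k ∈ Finset.Icc 1 (kn n), (Y n k ω - (μ[Y n k | 𝓕 n (k - 1)]) ω)) 0}
        ≤ μ Uu := measure_mono_ae hsubU
      _ = μ (U1 ∪ (U2 ∪ U3)) := by rw [hUu]
      _ ≤ μ U1 + μ (U2 ∪ U3) := measure_union_le _ _
      _ ≤ μ U1 + (μ U2 + μ U3) := add_le_add le_rfl (measure_union_le _ _)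
      _ ≤ (ρ / 8 + ρ / 8 + ρ / 8) + (ρ / 8 + ρ / 8) := by
          refine add_le_add hU1bound (add_le_add ?_ ?_)
          · exact le_trans hU2sub (hN2 n hn2).le
          · exact le_trans hU3sub (hN3 n hn3).le
      _ = ρ / 8 * 5 := by ring
      _ ≤ ρ / 8 * 8 := mul_le_mul_right (by norm_num) _
      _ = ρ := ENNReal.div_mul_cancel (by norm_num) (by norm_num)
  -- conclude
  have hfinal := aux_tim_add (μ := μ) hT (hN i j)
  refine TendstoInMeasure.congr (fun n => ae_of_all μ fun ω => ?_)
    (ae_of_all μ fun ω => ?_) hfinal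
  · rw [← Finset.sum_add_distrib]
    exact Finset.sum_congr rfl fun k _ => by ring
  · simp
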